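/- Let x ∈ [0,1) be continued-fraction normal. Then for every n ≥ 0, T^n x is continued-fraction normal (T the Gauss map), and for every finite string s = [c₀; c₁, …, c_k] with c₀ ∈ ℤ and c_i ∈ ℕ, the number s.x = ⟨c₀; c₁, …, c_k + x⟩ is continued-fraction normal. -/

import Mathlib

open MeasureTheory Filter

/-- The Gauss map `T(x) = 1/x - ⌊1/x⌋` (with `T 0 = 0`). -/
noncomputable def gauss (x : ℝ) : ℝ := if x = 0 then 0 else x⁻¹ - ⌊x⁻¹⌋

/-- `cfDigit x i` is the continued fraction partial quotient `a_{i+1}(x)`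
of `x ∈ [0,1)`, namely `⌊1 / T^i x⌋`. -/
noncomputable def cfDigit (x : ℝ) (i : ℕ) : ℤ := ⌊(gauss^[i] x)⁻¹⌋

/-- The continued fraction cylinder set of the string `s = [c₁,…,c_n]`. -/
def cyl (s : List ℤ) : Set ℝ :=
  {x | x ∈ Set.Ico (0 : ℝ) 1 ∧ ∀ i < s.length, cfDigit x i = s.getD i 0}

/-- The Gauss measure `μ(A) = ∫_A dx / ((log 2)(1+x))` on `[0,1)`. -/
noncomputable def gaussMeasure : Measure ℝ :=
  (volume.restrict (Set.Ico (0 : ℝ) 1)).withDensity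
    (fun x => ENNReal.ofReal (1 / (Real.log 2 * (1 + x))))

open scoped Classical in
/-- The number of `i < n` with `T^i x` in the cylinder of `s`. -/
noncomputable def cfCount (x : ℝ) (s : List ℤ) (n : ℕ) : ℕ :=
  ((Finset.range n).filter (fun i => gauss^[i] x ∈ cyl s)).card

/-- `x ∈ [0,1)` is CF-normal: every finite string of positive integers occurs in the
continued fraction expansion of `x` with limiting frequency equal to the Gauss
measure of its cylinder set. -/
noncomputable def cfNormal (x : ℝ) : Prop :=
  x ∈ Set.Ico (0 : ℝ) 1 ∧
  ∀ s : List ℤ, s ≠ [] → (∀ c ∈ s, 0 < c) →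
    Tendsto (fun n : ℕ => (cfCount x s n : ℝ) / n) atTop
      (nhds (gaussMeasure (cyl s)).toReal)

/-- A real number `y` is CF-normal if its fractional part is CF-normal. -/
noncomputable def cfNormalReal (y : ℝ) : Prop := cfNormal (Int.fract y)

/-- The action of an integer matrix on a real number by a linear fractional
transformation. -/
noncomputable def mobius (M : Matrix (Fin 2) (Fin 2) ℤ) (x : ℝ) : ℝ :=
  ((M 0 0 : ℝ) * x + (M 0 1 : ℝ)) / ((M 1 0 : ℝ) * x + (M 1 1 : ℝ))

/-- The matrix `A_i = [[1,i],[0,1]]`. -/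
def matA (i : ℤ) : Matrix (Fin 2) (Fin 2) ℤ := !![1, i; 0, 1]

/-- The matrix `J = [[0,1],[1,0]]`. -/
def matJ : Matrix (Fin 2) (Fin 2) ℤ := !![0, 1; 1, 0]

/-! ### Auxiliary lemmas -/

lemma gauss_eq_fract {x : ℝ} (hx : x ≠ 0) : gauss x = Int.fract x⁻¹ := by
  rw [gauss, if_neg hx, Int.fract]

lemma gauss_mem_Ico {x : ℝ} (hx : x ∈ Set.Ico (0:ℝ) 1) : gauss x ∈ Set.Ico (0:ℝ) 1 := by
  rcases eq_or_ne x 0 with h | h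
  · simp [gauss, h]
  · rw [gauss_eq_fract h]
    exact ⟨Int.fract_nonneg _, Int.fract_lt_one _⟩

lemma gauss_iterate_mem_Ico {x : ℝ} (hx : x ∈ Set.Ico (0:ℝ) 1) (n : ℕ) :
    gauss^[n] x ∈ Set.Ico (0:ℝ) 1 := by
  induction n with
  | zero => simpa using hx
  | succ n ih => rw [Function.iterate_succ_apply']; exact gauss_mem_Ico ih

open scoped Classical in
lemma cfCount_succ (x : ℝ) (s : List ℤ) (n : ℕ) :
    cfCount x s (n + 1) = cfCount x s n + (if gauss^[n] x ∈ cyl s then 1 else 0) := by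
  classical
  rw [cfCount, cfCount, Finset.range_add_one, Finset.filter_insert]
  split
  · rw [Finset.card_insert_of_notMem (by simp)]
  · simp

lemma cfCount_add (x : ℝ) (s : List ℤ) (n m : ℕ) :
    cfCount x s (n + m) = cfCount x s n + cfCount (gauss^[n] x) s m := by
  classical
  induction m with
  | zero => simp [cfCount]
  | succ m ih =>
      rw [← add_assoc, cfCount_succ, cfCount_succ, ih, add_assoc]
      have hcomm : gauss^[n + m] x = gauss^[m] (gauss^[n] x) := by
        rw [add_comm, Function.iterate_add_apply]
      rw [hcomm]

lemma aux_tendsto (f : ℕ → ℝ) {L : ℝ}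
    (h : Tendsto (fun n : ℕ => f n / n) atTop (nhds L)) (a : ℝ) (j k : ℕ) :
    Tendsto (fun n : ℕ => (f (n + j) + a) / ((n : ℝ) + (k : ℝ))) atTop (nhds L) := by
  have h1 : Tendsto (fun n : ℕ => f (n + j) / ((n : ℝ) + (j : ℝ))) atTop (nhds L) := by
    have h2 := (tendsto_add_atTop_iff_nat j).2 h
    simpa [Nat.cast_add] using h2
  have hden : Tendsto (fun n : ℕ => (n : ℝ) + (k : ℝ)) atTop atTop :=
    tendsto_atTop_add_const_right _ _ tendsto_natCast_atTop_atTop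
  have hinv : ∀ c : ℝ, Tendsto (fun n : ℕ => c / ((n : ℝ) + (k : ℝ))) atTop (nhds 0) :=
    fun c => Tendsto.div_atTop tendsto_const_nhds hden
  have hratio : Tendsto (fun n : ℕ => ((n : ℝ) + (j : ℝ)) / ((n : ℝ) + (k : ℝ)))
      atTop (nhds 1) := by
    have h3 := (tendsto_const_nhds (x := (1:ℝ)) (f := atTop (α := ℕ))).add
      (hinv ((j : ℝ) - (k : ℝ)))
    rw [add_zero] at h3
    refine Tendsto.congr' ?_ h3
    filter_upwards [eventually_ge_atTop 1] with n hn
    have hn1 : (1:ℝ) ≤ (n:ℝ) := by exact_mod_cast hn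
    have hnk : (n:ℝ) + (k:ℝ) ≠ 0 := by positivity
    field_simp
    ring
  have h4 := (h1.mul hratio).add (hinv a)
  rw [mul_one, add_zero] at h4
  refine Tendsto.congr' ?_ h4
  filter_upwards [eventually_ge_atTop 1] with n hn
  have hn1 : (1:ℝ) ≤ (n:ℝ) := by exact_mod_cast hn
  have hnj : (n:ℝ) + (j:ℝ) ≠ 0 := by positivity
  have hnk : (n:ℝ) + (k:ℝ) ≠ 0 := by positivity
  field_simp

/-- The nested continued fraction `[0; c₁, …, c_k + x]`. -/
noncomputable def nest : List ℤ → ℝ → ℝ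
  | [], x => x
  | d :: t, x => 1 / ((d : ℝ) + nest t x)

lemma nest_bounds {cs : List ℤ} (hcs : ∀ c ∈ cs, 0 < c) {x : ℝ}
    (hx : x ∈ Set.Ico (0:ℝ) 1) : 0 ≤ nest cs x ∧ nest cs x ≤ 1 := by
  induction cs with
  | nil => exact ⟨hx.1, le_of_lt hx.2⟩
  | cons d t ih =>
      have hd : (1:ℝ) ≤ (d:ℝ) := by exact_mod_cast hcs d (by simp)
      obtain ⟨h0, h1⟩ := ih (fun c hc => hcs c (List.mem_cons_of_mem _ hc))
      have hpos : (0:ℝ) < (d:ℝ) + nest t x := by linarith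
      constructor
      · simp only [nest]
        positivity
      · simp only [nest]
        rw [div_le_one hpos]
        linarith

lemma gauss_fract_step (d : ℤ) (hd : 1 ≤ d) (w : ℝ) (hw0 : 0 ≤ w) (hw1 : w ≤ 1) :
    gauss (Int.fract (1 / ((d : ℝ) + w))) = Int.fract w := by
  have hd1 : (1:ℝ) ≤ (d:ℝ) := by exact_mod_cast hd
  have hpos : (0:ℝ) < (d:ℝ) + w := by linarith
  rcases eq_or_lt_of_le (show (1:ℝ) ≤ (d:ℝ) + w by linarith) with heq | hlt
  · -- d + w = 1, so d = 1 and w = 0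
    have hw : w = 0 := by linarith [heq]
    have h1 : (1:ℝ) / ((d:ℝ) + w) = 1 := by rw [← heq]; simp
    rw [h1, hw]
    norm_num [Int.fract_one, gauss, Int.fract_zero]
  · have hu0 : (0:ℝ) < 1 / ((d:ℝ) + w) := by positivity
    have hu1 : 1 / ((d:ℝ) + w) < 1 := by
      rw [div_lt_one hpos]; exact hlt
    rw [Int.fract_eq_self.2 ⟨le_of_lt hu0, hu1⟩]
    rw [gauss_eq_fract (ne_of_gt hu0)]
    rw [one_div, inv_inv]
    rw [← Int.fract_intCast_add d w]

lemma gauss_iter_nest {cs : List ℤ} (hcs : ∀ c ∈ cs, 0 < c) {x : ℝ}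
    (hx : x ∈ Set.Ico (0:ℝ) 1) :
    gauss^[cs.length] (Int.fract (nest cs x)) = x := by
  induction cs with
  | nil => simp [nest, Int.fract_eq_self.2 ⟨hx.1, hx.2⟩]
  | cons d t ih =>
      have ht : ∀ c ∈ t, 0 < c := fun c hc => hcs c (List.mem_cons_of_mem _ hc)
      obtain ⟨h0, h1⟩ := nest_bounds ht hx
      have hd : 1 ≤ d := hcs d (by simp)
      rw [List.length_cons, Function.iterate_succ_apply]
      rw [show nest (d :: t) x = 1 / ((d:ℝ) + nest t x) from rfl]
      rw [gauss_fract_step d hd _ h0 h1]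
      exact ih ht

lemma matJA_entries (d : ℤ) : matJ * matA d = !![0, 1; 1, d] := by
  ext i j
  fin_cases i <;> fin_cases j <;>
    simp [matJ, matA, Matrix.mul_apply, Fin.sum_univ_two]

/-- Key invariant for products of `J * A_d`. -/
lemma mobius_prod {cs : List ℤ} (hcs : ∀ c ∈ cs, 0 < c) {x : ℝ}
    (hx : x ∈ Set.Ico (0:ℝ) 1) :
    0 < ((((cs.map (fun d => matJ * matA d)).prod) 1 0 : ℝ) * x
        + (((cs.map (fun d => matJ * matA d)).prod) 1 1 : ℝ)) ∧
    mobius ((cs.map (fun d => matJ * matA d)).prod) x = nest cs x := by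
  induction cs with
  | nil =>
      simp [mobius, nest, Matrix.one_apply]
  | cons d t ih =>
      have ht : ∀ c ∈ t, 0 < c := fun c hc => hcs c (List.mem_cons_of_mem _ hc)
      obtain ⟨hden, hmob⟩ := ih ht
      obtain ⟨h0, h1⟩ := nest_bounds ht hx
      have hd : (1:ℝ) ≤ (d:ℝ) := by exact_mod_cast hcs d (by simp)
      set N := (t.map (fun d => matJ * matA d)).prod with hN
      have hprod : ((d :: t).map (fun d => matJ * matA d)).prod = (matJ * matA d) * N := by
        simp [hN]
      have e00 : ((matJ * matA d) * N) 0 0 = N 1 0 := by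
        rw [matJA_entries]; simp [Matrix.mul_apply, Fin.sum_univ_two]
      have e01 : ((matJ * matA d) * N) 0 1 = N 1 1 := by
        rw [matJA_entries]; simp [Matrix.mul_apply, Fin.sum_univ_two]
      have e10 : ((matJ * matA d) * N) 1 0 = N 0 0 + d * N 1 0 := by
        rw [matJA_entries]; simp [Matrix.mul_apply, Fin.sum_univ_two]
      have e11 : ((matJ * matA d) * N) 1 1 = N 0 1 + d * N 1 1 := by
        rw [matJA_entries]; simp [Matrix.mul_apply, Fin.sum_univ_two]
      have hnum : (N 0 0 : ℝ) * x + (N 0 1 : ℝ)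
          = nest t x * ((N 1 0 : ℝ) * x + (N 1 1 : ℝ)) := by
        rw [← hmob, mobius]
        field_simp
        rw [mul_div_cancel_right₀ _ (by rw [mul_comm]; exact hden.ne')]
      have hden' : (0:ℝ) < ((N 0 0 + d * N 1 0 : ℤ) : ℝ) * x
          + ((N 0 1 + d * N 1 1 : ℤ) : ℝ) := by
        have heq2 : ((N 0 0 + d * N 1 0 : ℤ) : ℝ) * x
            + ((N 0 1 + d * N 1 1 : ℤ) : ℝ)
            = (nest t x + (d:ℝ)) * ((N 1 0 : ℝ) * x + (N 1 1 : ℝ)) := by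
          push_cast
          linear_combination hnum
        rw [heq2]
        have hpos2 : (0:ℝ) < nest t x + (d:ℝ) := by linarith
        positivity
      rw [hprod]
      constructor
      · rw [e10, e11]
        exact hden'
      · rw [mobius, e00, e01, e10, e11]
        rw [show nest (d :: t) x = 1 / ((d:ℝ) + nest t x) from rfl]
        have hdw : ((d:ℝ) + nest t x) ≠ 0 := by linarith
        rw [div_eq_div_iff hden'.ne' hdw]
        push_cast
        linear_combination -hnum

/-- Shifting by the Gauss map and prepending a finite string of partial quotients
both preserve CF-normality: if `x ∈ [0,1)` is CF-normal then so is `T^n x` for all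
`n`, and so is `s.x = ⟨c₀; c₁, …, c_k + x⟩` for any string `s = [c₀; c₁, …, c_k]`
with `c₀ ∈ ℤ` and `c₁,…,c_k ≥ 1`. -/
theorem cfNormal_shift_and_prepend (x : ℝ) (hx : cfNormal x) :
    (∀ n : ℕ, cfNormal (gauss^[n] x)) ∧
    (∀ (c₀ : ℤ) (cs : List ℤ), (∀ c ∈ cs, 0 < c) →
      cfNormalReal (mobius (matA c₀ * (cs.map (fun d => matJ * matA d)).prod) x)) := by
  obtain ⟨hmem, htend⟩ := hx
  constructor
  · -- shift part
    intro n₀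
    refine ⟨gauss_iterate_mem_Ico hmem n₀, ?_⟩
    intro s hs hpos
    have hC := htend s hs hpos
    have key := aux_tendsto (fun m => (cfCount x s m : ℝ)) hC
      (-(cfCount x s n₀ : ℝ)) n₀ 0
    refine Tendsto.congr ?_ key
    intro m
    have hadd := cfCount_add x s n₀ m
    have hcast : (cfCount (gauss^[n₀] x) s m : ℝ) = (cfCount x s (m + n₀) : ℝ)
        - (cfCount x s n₀ : ℝ) := by
      rw [add_comm m n₀, hadd]
      push_cast
      ring
    rw [hcast]
    push_cast
    ring_nf
  · -- prepend part
    intro c₀ cs hcs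
    obtain ⟨hden, hmob⟩ := mobius_prod hcs hmem
    set N := (cs.map (fun d => matJ * matA d)).prod with hN
    have e00 : (matA c₀ * N) 0 0 = N 0 0 + c₀ * N 1 0 := by
      simp [matA, Matrix.mul_apply, Fin.sum_univ_two]
    have e01 : (matA c₀ * N) 0 1 = N 0 1 + c₀ * N 1 1 := by
      simp [matA, Matrix.mul_apply, Fin.sum_univ_two]
    have e10 : (matA c₀ * N) 1 0 = N 1 0 := by
      simp [matA, Matrix.mul_apply, Fin.sum_univ_two]
    have e11 : (matA c₀ * N) 1 1 = N 1 1 := by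
      simp [matA, Matrix.mul_apply, Fin.sum_univ_two]
    have hy : mobius (matA c₀ * N) x = nest cs x + (c₀ : ℝ) := by
      rw [mobius, e00, e01, e10, e11]
      push_cast
      rw [← hmob, mobius]
      field_simp
      ring
    rw [cfNormalReal, hy, Int.fract_add_intCast]
    set z := Int.fract (nest cs x) with hz
    have hzmem : z ∈ Set.Ico (0:ℝ) 1 := ⟨Int.fract_nonneg _, Int.fract_lt_one _⟩
    have hiter : gauss^[cs.length] z = x := gauss_iter_nest hcs hmem
    refine ⟨hzmem, ?_⟩
    intro s hs hpos
    have hC := htend s hs hpos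
    set k := cs.length
    apply (tendsto_add_atTop_iff_nat k).mp
    have key := aux_tendsto (fun m => (cfCount x s m : ℝ)) hC
      ((cfCount z s k : ℝ)) 0 k
    refine Tendsto.congr ?_ key
    intro m
    have hadd : cfCount z s (k + m) = cfCount z s k + cfCount x s m := by
      rw [cfCount_add, hiter]
    rw [add_comm m k, hadd]
    push_cast
    ring_nf
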